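/- arXiv:2605.11775 — 3 statements merged into one kernel-verified Lean document; each statement's English description precedes it below -/
import Mathlib

section
/- For any probability distribution p with full support on a finite set V, the quantity t2(p) = ∑_{v∈V} p_v²(H(p) + log p_v) is nonnegative, with equality if and only if p is uniform. -/
noncomputable def entropy {V : Type*} [Fintype V] (p : V → ℝ) : ℝ :=
  -∑ v, p v * Real.log (p v)

noncomputable def t2 {V : Type*} [Fintype V] (p : V → ℝ) : ℝ :=
  ∑ v, (p v) ^ 2 * (entropy p + Real.log (p v))

theorem stmt4 {V : Type*} [Fintype V] [Nonempty V] (p : V → ℝ)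
    (hp : ∀ v, 0 < p v) (hs : ∑ v, p v = 1) :
    0 ≤ t2 p ∧ (t2 p = 0 ↔ ∀ v, p v = 1 / Fintype.card V) := by
  set L := fun v => Real.log (p v) with hL
  have hterm : ∀ v w, 0 ≤ p v * p w * ((p v - p w) * (L v - L w)) := by
    intro v w
    apply mul_nonneg (mul_nonneg (hp v).le (hp w).le)
    rcases le_total (p v) (p w) with h | h
    · have hlog : L v ≤ L w := Real.log_le_log (hp v) h
      nlinarith
    · have hlog : L w ≤ L v := Real.log_le_log (hp w) h
      nlinarith
  have h1 : t2 p = ∑ v, ∑ w, p v ^ 2 * (p w * (L v - L w)) := by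
    unfold t2 entropy
    refine Finset.sum_congr rfl fun v _ => ?_
    rw [← Finset.mul_sum]
    congr 1
    have : ∑ w, p w * (L v - L w) = (∑ w, p w) * L v - ∑ w, p w * L w := by
      rw [Finset.sum_mul, ← Finset.sum_sub_distrib]
      exact Finset.sum_congr rfl fun w _ => by ring
    rw [this, hs]
    ring
  have h2 : t2 p = ∑ v, ∑ w, p w ^ 2 * (p v * (L w - L v)) := by
    rw [h1, Finset.sum_comm]
  have hkey : 2 * t2 p = ∑ v, ∑ w, p v * p w * ((p v - p w) * (L v - L w)) := by
    calc 2 * t2 p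
        = (∑ v, ∑ w, p v ^ 2 * (p w * (L v - L w)))
          + ∑ v, ∑ w, p w ^ 2 * (p v * (L w - L v)) := by rw [← h1, ← h2]; ring
      _ = ∑ v, ∑ w, p v * p w * ((p v - p w) * (L v - L w)) := by
          rw [← Finset.sum_add_distrib]
          refine Finset.sum_congr rfl fun v _ => ?_
          rw [← Finset.sum_add_distrib]
          exact Finset.sum_congr rfl fun w _ => by ring
  have hsum_nn : 0 ≤ ∑ v, ∑ w, p v * p w * ((p v - p w) * (L v - L w)) :=
    Finset.sum_nonneg fun v _ => Finset.sum_nonneg fun w _ => hterm v w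
  have hnn : 0 ≤ t2 p := by linarith [hkey ▸ hsum_nn]
  refine ⟨hnn, ?_, ?_⟩
  · intro ht
    have hz : ∑ v, ∑ w, p v * p w * ((p v - p w) * (L v - L w)) = 0 := by
      rw [← hkey, ht]; ring
    have hall : ∀ v ∈ Finset.univ, ∀ w ∈ Finset.univ,
        p v * p w * ((p v - p w) * (L v - L w)) = 0 := by
      intro v hv w hw
      have := (Finset.sum_eq_zero_iff_of_nonneg
        (fun v _ => Finset.sum_nonneg fun w _ => hterm v w)).mp hz v hv
      exact (Finset.sum_eq_zero_iff_of_nonneg (fun w _ => hterm v w)).mp this w hw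
    have hconst : ∀ v w, p v = p w := by
      intro v w
      by_contra hne
      have h0 := hall v (Finset.mem_univ v) w (Finset.mem_univ w)
      rcases lt_or_gt_of_ne hne with h | h
      · have hlog : L v < L w := Real.log_lt_log (hp v) h
        nlinarith [mul_pos (hp v) (hp w), mul_pos (sub_pos.2 h) (sub_pos.2 hlog),
          mul_pos (mul_pos (hp v) (hp w)) (mul_pos (sub_pos.2 h) (sub_pos.2 hlog))]
      · have hlog : L w < L v := Real.log_lt_log (hp w) h
        nlinarith [mul_pos (hp v) (hp w), mul_pos (sub_pos.2 h) (sub_pos.2 hlog),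
          mul_pos (mul_pos (hp v) (hp w)) (mul_pos (sub_pos.2 h) (sub_pos.2 hlog))]
    intro v
    have : ∑ w, p w = (Fintype.card V : ℝ) * p v := by
      rw [Finset.sum_congr rfl fun w _ => hconst w v]
      simp [Finset.sum_const, mul_comm]
    have hc : (0:ℝ) < (Fintype.card V : ℝ) := by
      exact_mod_cast Fintype.card_pos
    rw [hs] at this
    field_simp
    linarith
  · intro h
    have hc : (Fintype.card V : ℝ) ≠ 0 := by
      exact_mod_cast Fintype.card_ne_zero
    have hz : entropy p + Real.log (p (Classical.arbitrary V)) = 0 := by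
      simp only [entropy, h, Finset.sum_const, nsmul_eq_mul]
      field_simp
      rw [Finset.card_univ]; ring
    unfold t2
    refine Finset.sum_eq_zero fun v _ => ?_
    rw [h v, ← h (Classical.arbitrary V), hz, mul_zero]
end

section
/- Let p be a softmax distribution with logits z on a finite set V, fix y ∈ V, A ∈ ℝ, and η > 0, and define updated logits z'_v = z_v + ηA(𝟙[v=y] − p_v). Then the directional derivative of entropy along this update direction, i.e., d/dη H(softmax(z + η·δ))|_{η=0} with δ_v = A(𝟙[v=y] − p_v), equals A·(−t1(p,y) + t2(p)), where t1(p,y) = p_y(H(p) + log p_y) and t2(p) = ∑_v p_v²(H(p) + log p_v). -/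
noncomputable def softmax {V : Type*} [Fintype V] [DecidableEq V] (z : V → ℝ) (v : V) : ℝ :=
  Real.exp (z v) / ∑ u, Real.exp (z u)

noncomputable def t1 {V : Type*} [Fintype V] (p : V → ℝ) (y : V) : ℝ :=
  p y * (entropy p + Real.log (p y))

theorem stmt8 {V : Type*} [Fintype V] [DecidableEq V] [Nonempty V] (z : V → ℝ) (y : V) (A : ℝ) :
    HasDerivAt
      (fun η : ℝ => entropy (softmax (fun v =>
        z v + η * (A * ((if v = y then (1:ℝ) else 0) - softmax z v)))))
      (A * (-(t1 (softmax z) y) + t2 (softmax z))) 0 := by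
  classical
  set e : V → ℝ := fun v => Real.exp (z v) with he
  set S : ℝ := ∑ u, e u with hS
  have hSpos : 0 < S := Finset.sum_pos (fun u _ => Real.exp_pos _) Finset.univ_nonempty
  have hSne : S ≠ 0 := ne_of_gt hSpos
  have hpv : ∀ v, softmax z v = e v / S := fun v => rfl
  set p : V → ℝ := softmax z with hp
  have hppos : ∀ v, 0 < p v := fun v => by rw [hpv v]; exact div_pos (Real.exp_pos _) hSpos
  have hpne : ∀ v, p v ≠ 0 := fun v => ne_of_gt (hppos v)
  set δ : V → ℝ := fun v => A * ((if v = y then (1:ℝ) else 0) - p v) with hδ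
  set Sd : ℝ := ∑ u, δ u * e u with hSd
  have hnum : ∀ v, HasDerivAt (fun η : ℝ => Real.exp (z v + η * δ v)) (δ v * e v) 0 := by
    intro v
    have h1 : HasDerivAt (fun η : ℝ => z v + η * δ v) (δ v) 0 := by
      simpa using ((hasDerivAt_id (0:ℝ)).mul_const (δ v)).const_add (z v)
    have h2 := h1.exp
    simpa [he, mul_comm] using h2
  have hden : HasDerivAt (fun η : ℝ => ∑ u, Real.exp (z u + η * δ u)) Sd 0 :=
    HasDerivAt.fun_sum (fun u _ => hnum u)
  have hdenval : (∑ u, Real.exp (z u + 0 * δ u)) = S := by simp [hS, he]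
  set pd : V → ℝ := fun v => (δ v * e v * S - e v * Sd) / S ^ 2 with hpd
  have hq : ∀ v, HasDerivAt
      (fun η : ℝ => Real.exp (z v + η * δ v) / ∑ u, Real.exp (z u + η * δ u)) (pd v) 0 := by
    intro v
    have := (hnum v).fun_div hden (by rw [hdenval]; exact hSne)
    simpa [hpd, he, hdenval] using this
  have hqval : ∀ v, Real.exp (z v + 0 * δ v) / (∑ u, Real.exp (z u + 0 * δ u)) = p v := by
    intro v; rw [hdenval]; simp only [zero_mul, add_zero]; exact (hpv v).symm
  have hterm : ∀ v, HasDerivAt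
      (fun η : ℝ => (Real.exp (z v + η * δ v) / ∑ u, Real.exp (z u + η * δ u)) *
        Real.log (Real.exp (z v + η * δ v) / ∑ u, Real.exp (z u + η * δ u)))
      (pd v * Real.log (p v) + pd v) 0 := by
    intro v
    have hlog := (hq v).log (by rw [hqval v]; exact hpne v)
    have := (hq v).mul hlog
    rw [hqval v] at this
    have hcan : p v * (pd v / p v) = pd v := mul_div_cancel₀ _ (hpne v)
    rw [hcan] at this
    exact this
  have hsum : HasDerivAt
      (fun η : ℝ => -∑ v, (Real.exp (z v + η * δ v) / ∑ u, Real.exp (z u + η * δ u)) *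
        Real.log (Real.exp (z v + η * δ v) / ∑ u, Real.exp (z u + η * δ u)))
      (-∑ v, (pd v * Real.log (p v) + pd v)) 0 :=
    (HasDerivAt.fun_sum (fun v _ => hterm v)).neg
  have hfun : (fun η : ℝ => entropy (softmax (fun v =>
        z v + η * (A * ((if v = y then (1:ℝ) else 0) - softmax z v)))))
      = (fun η : ℝ => -∑ v, (Real.exp (z v + η * δ v) / ∑ u, Real.exp (z u + η * δ u)) *
        Real.log (Real.exp (z v + η * δ v) / ∑ u, Real.exp (z u + η * δ u))) := by
    funext η
    simp only [entropy, softmax, hδ, hp]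
  rw [hfun]
  convert hsum using 1
  -- algebra
  have hpd2 : ∀ v, pd v = p v * δ v - p v * (Sd / S) := by
    intro v
    show (δ v * e v * S - e v * Sd) / S ^ 2 = _
    rw [hpv v]
    field_simp
  have hsump : (∑ v, p v) = 1 := by
    simp only [hpv]
    rw [← Finset.sum_div, ← hS, div_self hSne]
  have hD : Sd / S = ∑ v, p v * δ v := by
    rw [hSd, Finset.sum_div]
    refine Finset.sum_congr rfl (fun v _ => ?_)
    rw [hpv v]; ring
  have hsumpd : (∑ v, pd v) = 0 := by
    simp only [hpd2]
    rw [Finset.sum_sub_distrib, ← Finset.sum_mul, hsump, one_mul, hD, sub_self]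
  set H : ℝ := ∑ v, p v * Real.log (p v) with hH
  set Q : ℝ := ∑ v, p v ^ 2 with hQ
  set P2 : ℝ := ∑ v, p v ^ 2 * Real.log (p v) with hP2
  have hE : entropy p = -H := rfl
  have hDval : Sd / S = A * (p y - Q) := by
    rw [hD]
    have step : ∀ v ∈ Finset.univ, p v * δ v
        = A * (if v = y then p v else 0) - A * (p v ^ 2) := by
      intro v _
      simp only [hδ]
      split_ifs <;> ring
    rw [Finset.sum_congr rfl step, Finset.sum_sub_distrib, ← Finset.mul_sum, ← Finset.mul_sum,
      Finset.sum_ite_eq' Finset.univ y p, if_pos (Finset.mem_univ y), ← hQ]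
    ring
  have hPd : ∑ v, pd v * Real.log (p v)
      = A * (p y * Real.log (p y) - P2) - A * (p y - Q) * H := by
    have step : ∀ v ∈ Finset.univ, pd v * Real.log (p v)
        = (A * (if v = y then p v * Real.log (p v) else 0) - A * (p v ^ 2 * Real.log (p v)))
          - A * (p y - Q) * (p v * Real.log (p v)) := by
      intro v _
      rw [hpd2 v, hDval]
      simp only [hδ]
      split_ifs <;> ring
    rw [Finset.sum_congr rfl step, Finset.sum_sub_distrib, Finset.sum_sub_distrib,
      ← Finset.mul_sum, ← Finset.mul_sum, ← Finset.mul_sum,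
      Finset.sum_ite_eq' Finset.univ y (fun v => p v * Real.log (p v)),
      if_pos (Finset.mem_univ y), ← hP2, ← hH]
    ring
  have ht2 : t2 p = -(H * Q) + P2 := by
    rw [t2, hE]
    have step : ∀ v ∈ Finset.univ, p v ^ 2 * (-H + Real.log (p v))
        = p v ^ 2 * (-H) + p v ^ 2 * Real.log (p v) := by
      intro v _; ring
    rw [Finset.sum_congr rfl step, Finset.sum_add_distrib, ← Finset.sum_mul, ← hQ, ← hP2]
    ring
  have ht1 : t1 p y = p y * (-H + Real.log (p y)) := by rw [t1, hE]
  rw [Finset.sum_add_distrib, hsumpd, add_zero, hPd, ht1, ht2]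
  ring
end

section
/- Under the logit update z'_v = z_v + ηA(𝟙[v=y] − p_v) applied to a softmax policy, the entropy of the updated distribution satisfies H(softmax(z')) = H(softmax(z)) + ηA(−t1 + t2) + O(η²) as η → 0, where t1 = p_y(H(p) + log p_y) and t2 = ∑_v p_v²(H(p) + log p_v). -/
set_option maxHeartbeats 1000000

lemma sum_ite_one_mul {V : Type*} [Fintype V] [DecidableEq V] (y : V) (f : V → ℝ) :
    ∑ u, (if u = y then (1:ℝ) else 0) * f u = f y := by
  simp [ite_mul, Finset.sum_ite_eq']

lemma sum_exp_pos {V : Type*} [Fintype V] [Nonempty V] (z : V → ℝ) :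
    (0:ℝ) < ∑ u, Real.exp (z u) :=
  Finset.sum_pos (fun u _ => Real.exp_pos _) Finset.univ_nonempty

lemma log_softmax {V : Type*} [Fintype V] [DecidableEq V] [Nonempty V] (z : V → ℝ) (v : V) :
    Real.log (softmax z v) = z v - Real.log (∑ u, Real.exp (z u)) := by
  unfold softmax
  rw [Real.log_div (Real.exp_ne_zero _) (sum_exp_pos z).ne', Real.log_exp]

lemma entropy_softmax {V : Type*} [Fintype V] [DecidableEq V] [Nonempty V] (z : V → ℝ) :
    entropy (softmax z) =
      Real.log (∑ u, Real.exp (z u)) - (∑ v, z v * Real.exp (z v)) / (∑ u, Real.exp (z u)) := by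
  have hS := sum_exp_pos z
  unfold entropy softmax
  have h1 : ∀ v : V, Real.exp (z v) / (∑ u, Real.exp (z u)) *
      Real.log (Real.exp (z v) / (∑ u, Real.exp (z u)))
      = z v * Real.exp (z v) / (∑ u, Real.exp (z u))
        - Real.log (∑ u, Real.exp (z u)) * (Real.exp (z v) / (∑ u, Real.exp (z u))) := by
    intro v
    rw [Real.log_div (Real.exp_ne_zero _) hS.ne', Real.log_exp]
    ring
  rw [Finset.sum_congr rfl fun v _ => h1 v, Finset.sum_sub_distrib, ← Finset.sum_div,
    ← Finset.mul_sum, ← Finset.sum_div, div_self hS.ne']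
  ring

theorem stmt9 {V : Type*} [Fintype V] [DecidableEq V] [Nonempty V] (z : V → ℝ) (y : V) (A : ℝ) :
    ∃ C > (0:ℝ), ∃ η₀ > (0:ℝ), ∀ η : ℝ, 0 < η → η < η₀ →
      |entropy (softmax (fun v =>
          z v + η * A * ((if v = y then (1:ℝ) else 0) - softmax z v)))
        - entropy (softmax z)
        - η * A * (-(t1 (softmax z) y) + t2 (softmax z))| ≤ C * η ^ 2 := by
  classical
  have hS0 : (0:ℝ) < ∑ u, Real.exp (z u) := sum_exp_pos z
  set S0 : ℝ := ∑ u, Real.exp (z u) with hS0def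
  set c : V → ℝ := fun v => A * ((if v = y then (1:ℝ) else 0) - softmax z v) with hcdef
  set Sf : ℝ → ℝ := fun η => ∑ u, Real.exp (z u + η * c u) with hSf
  set Gf : ℝ → ℝ := fun η => ∑ u, (z u + η * c u) * Real.exp (z u + η * c u) with hGf
  have hSfpos : ∀ η, 0 < Sf η := fun η => by
    rw [hSf]; exact Finset.sum_pos (fun u _ => Real.exp_pos _) Finset.univ_nonempty
  set g : ℝ → ℝ := fun η => Real.log (Sf η) - Gf η / Sf η with hgdef
  -- entropy of updated softmax equals g
  have hfg : ∀ η : ℝ, entropy (softmax (fun v =>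
      z v + η * A * ((if v = y then (1:ℝ) else 0) - softmax z v))) = g η := by
    intro η
    have hz : (fun v => z v + η * A * ((if v = y then (1:ℝ) else 0) - softmax z v))
        = fun v => z v + η * c v := by
      funext v; simp only [hcdef]; ring
    rw [hz, entropy_softmax, hgdef, hSf, hGf]
  -- smoothness of the pieces
  have haff : ∀ u : V, ContDiff ℝ 2 (fun η : ℝ => z u + η * c u) :=
    fun u => contDiff_const.add (contDiff_id.mul contDiff_const)
  have hSfc : ContDiff ℝ 2 Sf := by
    rw [hSf]
    exact ContDiff.sum fun u _ => Real.contDiff_exp.comp (haff u)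
  have hGfc : ContDiff ℝ 2 Gf := by
    rw [hGf]
    exact ContDiff.sum fun u _ => (haff u).mul (Real.contDiff_exp.comp (haff u))
  have hgc : ContDiff ℝ 2 g := by
    rw [hgdef]
    apply ContDiff.sub
    · exact contDiff_iff_contDiffAt.mpr fun x =>
        (Real.contDiffAt_log.mpr (hSfpos x).ne').comp x hSfc.contDiffAt
    · exact contDiff_iff_contDiffAt.mpr fun x =>
        hGfc.contDiffAt.div hSfc.contDiffAt (hSfpos x).ne'
  -- derivatives at 0
  have haff' : ∀ u : V, HasDerivAt (fun η : ℝ => z u + η * c u) (c u) 0 := fun u => by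
    simpa using ((hasDerivAt_id (0:ℝ)).mul_const (c u)).const_add (z u)
  have hS' : HasDerivAt Sf (∑ u, c u * Real.exp (z u)) 0 := by
    rw [hSf]
    apply HasDerivAt.fun_sum
    intro u _
    have h2 := (haff' u).exp
    simp only [zero_mul, add_zero] at h2
    simpa [mul_comm] using h2
  have hG' : HasDerivAt Gf (∑ u, c u * Real.exp (z u) * (1 + z u)) 0 := by
    rw [hGf]
    apply HasDerivAt.fun_sum
    intro u _
    have h2 := (haff' u).fun_mul (haff' u).exp
    simp only [zero_mul, add_zero] at h2
    exact h2.congr_deriv (by ring)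
  set Dv : ℝ := ∑ u, c u * Real.exp (z u) with hDv
  set Gv : ℝ := ∑ u, c u * Real.exp (z u) * (1 + z u) with hGvdef
  set L3 : ℝ := ∑ u, z u * Real.exp (z u) with hL3
  have hSf0 : Sf 0 = S0 := by rw [hSf, hS0def]; simp
  have hGf0 : Gf 0 = L3 := by rw [hGf, hL3]; simp
  have hg' : HasDerivAt g (Dv / S0 - (Gv * S0 - L3 * Dv) / S0 ^ 2) 0 := by
    rw [hgdef]
    have h1 := hS'.log (hSfpos 0).ne'
    have h2 := hG'.div hS' (hSfpos 0).ne'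
    rw [hSf0] at h1 h2
    rw [hGf0] at h2
    exact h1.sub h2
  -- algebraic identity for the derivative
  have hsm : ∀ u : V, softmax z u = Real.exp (z u) / S0 := fun u => by
    rw [hS0def]; rfl
  set L2 : ℝ := ∑ u, Real.exp (z u) ^ 2 with hL2
  set L4 : ℝ := ∑ u, z u * Real.exp (z u) ^ 2 with hL4
  have hDvval : Dv = A * Real.exp (z y) - A / S0 * L2 := by
    rw [hDv, hL2]
    have h1 : ∀ u : V, c u * Real.exp (z u)
        = A * ((if u = y then (1:ℝ) else 0) * Real.exp (z u))
          - A / S0 * Real.exp (z u) ^ 2 := by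
      intro u
      simp only [hcdef]
      rw [hsm u]
      ring
    rw [Finset.sum_congr rfl fun u _ => h1 u, Finset.sum_sub_distrib, ← Finset.mul_sum,
      ← Finset.mul_sum, sum_ite_one_mul y (fun u => Real.exp (z u))]
  have hGvval : Gv = (A * Real.exp (z y) - A / S0 * L2)
      + (A * (z y * Real.exp (z y)) - A / S0 * L4) := by
    rw [hGvdef, hL2, hL4]
    have h1 : ∀ u : V, c u * Real.exp (z u) * (1 + z u)
        = (A * ((if u = y then (1:ℝ) else 0) * Real.exp (z u))
            - A / S0 * Real.exp (z u) ^ 2)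
          + (A * ((if u = y then (1:ℝ) else 0) * (z u * Real.exp (z u)))
             - A / S0 * (z u * Real.exp (z u) ^ 2)) := by
      intro u
      simp only [hcdef]
      rw [hsm u]
      ring
    rw [Finset.sum_congr rfl fun u _ => h1 u, Finset.sum_add_distrib,
      Finset.sum_sub_distrib, Finset.sum_sub_distrib, ← Finset.mul_sum, ← Finset.mul_sum,
      ← Finset.mul_sum, ← Finset.mul_sum,
      sum_ite_one_mul y (fun u => Real.exp (z u)),
      sum_ite_one_mul y (fun u => z u * Real.exp (z u))]
  have hH : entropy (softmax z) = Real.log S0 - L3 / S0 := by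
    rw [entropy_softmax, hS0def, hL3]
  have ht1 : t1 (softmax z) y = Real.exp (z y) / S0 * (z y - L3 / S0) := by
    unfold t1
    rw [hH, log_softmax, hsm y, ← hS0def]
    ring
  have ht2 : t2 (softmax z) = L4 / S0 ^ 2 - L3 / S0 ^ 3 * L2 := by
    unfold t2
    have h1 : ∀ v : V, (softmax z v) ^ 2 * (entropy (softmax z) + Real.log (softmax z v))
        = z v * Real.exp (z v) ^ 2 / S0 ^ 2 - L3 / S0 ^ 3 * Real.exp (z v) ^ 2 := by
      intro v
      rw [hH, log_softmax, hsm v, ← hS0def]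
      field_simp
      ring
    rw [Finset.sum_congr rfl fun v _ => h1 v, Finset.sum_sub_distrib, ← Finset.sum_div,
      ← Finset.mul_sum, hL4, hL2]
  have hDval : Dv / S0 - (Gv * S0 - L3 * Dv) / S0 ^ 2
      = A * (-(t1 (softmax z) y) + t2 (softmax z)) := by
    rw [hDvval, hGvval, ht1, ht2]
    field_simp
    ring
  -- Taylor estimate on [0,1]
  have hgc' : ContDiffOn ℝ ((1:ℕ) + 1) g (Set.Icc (0:ℝ) 1) := by
    exact_mod_cast hgc.contDiffOn (s := Set.Icc (0:ℝ) 1)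
  obtain ⟨C, hC⟩ := exists_taylor_mean_remainder_bound (n := 1) (zero_le_one (α := ℝ)) hgc'
  refine ⟨max C 1, lt_of_lt_of_le one_pos (le_max_right _ _), 1, one_pos, ?_⟩
  intro η hη0 hη1
  have hmem : η ∈ Set.Icc (0:ℝ) 1 := ⟨hη0.le, hη1.le⟩
  have hud : UniqueDiffWithinAt ℝ (Set.Icc (0:ℝ) 1) 0 :=
    (uniqueDiffOn_Icc one_pos) 0 ⟨le_refl 0, zero_le_one⟩
  have hderivW : derivWithin g (Set.Icc (0:ℝ) 1) 0
      = Dv / S0 - (Gv * S0 - L3 * Dv) / S0 ^ 2 :=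
    hg'.hasDerivWithinAt.derivWithin hud
  have htay : taylorWithinEval g 1 (Set.Icc (0:ℝ) 1) 0 η
      = g 0 + η * (Dv / S0 - (Gv * S0 - L3 * Dv) / S0 ^ 2) := by
    rw [taylor_within_apply]
    simp [Finset.sum_range_succ, iteratedDerivWithin_one, hderivW]
  have hbound := hC η hmem
  rw [htay, sub_zero, Real.norm_eq_abs] at hbound
  have hg0 : g 0 = entropy (softmax z) := by
    rw [hgdef]; simp only []
    rw [hSf0, hGf0, hH]
  rw [hfg η, ← hg0]
  have heq : g η - g 0 - η * A * (-(t1 (softmax z) y) + t2 (softmax z))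
      = g η - (g 0 + η * (Dv / S0 - (Gv * S0 - L3 * Dv) / S0 ^ 2)) := by
    rw [hDval]; ring
  rw [heq]
  calc |g η - (g 0 + η * (Dv / S0 - (Gv * S0 - L3 * Dv) / S0 ^ 2))| ≤ C * η ^ 2 := hbound
    _ ≤ max C 1 * η ^ 2 := mul_le_mul_of_nonneg_right (le_max_left _ _) (sq_nonneg _)
end
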